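/- Let (v^n)_{n≥1} be a sequence of global weak solutions (with initial data (a^n, b^n) in the energy space), and suppose there exist a family of functions v_i : [0,∞) → ℝ and sequences a, b in the energy space with v_i(0) = a_i and such that for every T > 0: sup_{t∈[0,T]} [Σ_i ((v^n_i)'(t) − v_i'(t))² + Σ_i λ_i²(v^n_i(t) − v_i(t))²] → 0 as n → ∞, where the maps t ↦ (v_i'(t))_i and t ↦ (λ_i v_i(t))_i are continuous into ℓ² and v_i'(0) = b_i. Then (v_i)_{i≥1} is a global weak solution with initial data (a,b). -/

import Mathlib

open Filter Set

/-- Derivative from within the half line `[0, ∞)`. -/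
noncomputable def derIci (f : ℝ → ℝ) : ℝ → ℝ := derivWithin f (Set.Ici (0 : ℝ))

/-- The pair `(a, b)` belongs to the energy space `D(A^{1/2}) × H`. -/
def InEnergy (lam a b : ℕ → ℝ) : Prop :=
  Summable fun i => (b i) ^ 2 + (lam i) ^ 2 * (a i) ^ 2

/-- `R_k(a,b) = Σ_{i>k} (b_i² + λ_i² a_i²)`. -/
noncomputable def Rk (lam a b : ℕ → ℝ) (k : ℕ) : ℝ :=
  ∑' i : ℕ, if k < i then (b i) ^ 2 + (lam i) ^ 2 * (a i) ^ 2 else 0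

/-- Lacunary (spectral gap) data: `R_k(a,b)·k²·exp(k λ_k) ≤ 1` for infinitely many
positive integers `k`. -/
def Lacunary (lam a b : ℕ → ℝ) : Prop :=
  InEnergy lam a b ∧
    {k : ℕ | 0 < k ∧
      Rk lam a b k * (k : ℝ) ^ 2 * Real.exp ((k : ℝ) * lam k) ≤ 1}.Infinite

/-- `M(σ) = ∫₀^σ m(s) ds`. -/
noncomputable def Mfun (m : ℝ → ℝ) (σ : ℝ) : ℝ := ∫ s in (0:ℝ)..σ, m s

/-- The conserved quantity `H₀ = Σ_i b_i² + M(Σ_i λ_i² a_i²)`. -/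
noncomputable def H0 (lam : ℕ → ℝ) (m : ℝ → ℝ) (a b : ℕ → ℝ) : ℝ :=
  (∑' i, (b i) ^ 2) + Mfun m (∑' i, (lam i) ^ 2 * (a i) ^ 2)

/-- Galerkin approximation of order `n` (components of index `> n` extended by zero):
the solution of `v_i'' + m(Σ_{j≤n} λ_j² v_j²) λ_i² v_i = 0` for `i ≤ n`, with
`v_i(0) = a_i`, `v_i'(0) = b_i`. -/
def GalerkinSol (lam : ℕ → ℝ) (m : ℝ → ℝ) (a b : ℕ → ℝ) (n : ℕ)
    (v : ℕ → ℝ → ℝ) : Prop :=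
  (∀ i, ContDiffOn ℝ 2 (v i) (Set.Ici 0)) ∧
  (∀ i ≤ n, v i 0 = a i) ∧
  (∀ i ≤ n, derIci (v i) 0 = b i) ∧
  (∀ i, n < i → ∀ t, v i t = 0) ∧
  (∀ i ≤ n, ∀ t, 0 ≤ t →
    derIci (derIci (v i)) t
      + m (∑ j ∈ Finset.range (n + 1), (lam j) ^ 2 * (v j t) ^ 2)
        * (lam i) ^ 2 * v i t = 0)

/-- Global weak solution with initial data `(a,b)`: a family `v_i ∈ C²([0,∞))` with
`v_i(0) = a_i`, `v_i'(0) = b_i`, such that `Σ v_i'(t)²` and `Σ λ_i² v_i(t)²` converge,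
the maps `t ↦ (v_i'(t))_i` and `t ↦ (λ_i v_i(t))_i` are continuous from `[0,∞)` into
`ℓ²`, and `v_i'' + m(Σ_j λ_j² v_j²) λ_i² v_i = 0` for every `i` and every `t ≥ 0`. -/
def WeakSol (lam : ℕ → ℝ) (m : ℝ → ℝ) (a b : ℕ → ℝ) (v : ℕ → ℝ → ℝ) : Prop :=
  (∀ i, ContDiffOn ℝ 2 (v i) (Set.Ici 0)) ∧
  (∀ i, v i 0 = a i) ∧
  (∀ i, derIci (v i) 0 = b i) ∧
  (∀ t, 0 ≤ t → Summable fun i => (derIci (v i) t) ^ 2) ∧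
  (∀ t, 0 ≤ t → Summable fun i => (lam i) ^ 2 * (v i t) ^ 2) ∧
  (∀ t₀, 0 ≤ t₀ → Tendsto (fun t => ∑' i, (derIci (v i) t - derIci (v i) t₀) ^ 2)
      (nhdsWithin t₀ (Set.Ici 0)) (nhds 0)) ∧
  (∀ t₀, 0 ≤ t₀ → Tendsto (fun t => ∑' i, (lam i) ^ 2 * (v i t - v i t₀) ^ 2)
      (nhdsWithin t₀ (Set.Ici 0)) (nhds 0)) ∧
  (∀ i, ∀ t, 0 ≤ t →
    derIci (derIci (v i)) t
      + m (∑' j, (lam j) ^ 2 * (v j t) ^ 2) * (lam i) ^ 2 * v i t = 0)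


section Stmt16Helpers
open Topology MeasureTheory intervalIntegral

lemma summable_wsq_sub {lam x y : ℕ → ℝ} (hx : Summable fun i => (lam i)^2 * (x i)^2)
    (hy : Summable fun i => (lam i)^2 * (y i)^2) :
    Summable fun i => (lam i)^2 * (x i - y i)^2 := by
  refine Summable.of_nonneg_of_le (fun i => by positivity) (fun i => ?_)
    ((hx.add hy).mul_left 2)
  nlinarith [mul_nonneg (sq_nonneg (lam i)) (sq_nonneg (x i + y i))]

lemma summable_sq_sub {x y : ℕ → ℝ} (hx : Summable fun i => (x i)^2)
    (hy : Summable fun i => (y i)^2) :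
    Summable fun i => (x i - y i)^2 := by
  have := summable_wsq_sub (lam := fun _ => 1) (x := x) (y := y) (by simpa) (by simpa)
  simpa using this

lemma tsum_cs {f g : ℕ → ℝ} (hf : Summable fun i => (f i)^2) (hg : Summable fun i => (g i)^2) :
    ∑' i, |f i * g i| ≤ Real.sqrt (∑' i, (f i)^2) * Real.sqrt (∑' i, (g i)^2) := by
  have hsum : Summable fun i => |f i * g i| := by
    refine Summable.of_nonneg_of_le (fun i => abs_nonneg _) (fun i => ?_) (hf.add hg)
    calc |f i * g i| = |f i| * |g i| := abs_mul _ _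
    _ ≤ (f i)^2 + (g i)^2 := by nlinarith [sq_nonneg (|f i| - |g i|), sq_abs (f i), sq_abs (g i), abs_nonneg (f i), abs_nonneg (g i)]
  refine Summable.tsum_le_of_sum_le hsum (fun s => ?_)
  have h1 : (∑ i ∈ s, |f i * g i|)^2 ≤ (∑ i ∈ s, (f i)^2) * (∑ i ∈ s, (g i)^2) := by
    have := Finset.sum_mul_sq_le_sq_mul_sq s (fun i => |f i|) (fun i => |g i|)
    simpa [abs_mul, sq_abs] using this
  have h2 : (∑ i ∈ s, (f i)^2) ≤ ∑' i, (f i)^2 := Summable.sum_le_tsum s (fun i _ => sq_nonneg _) hf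
  have h3 : (∑ i ∈ s, (g i)^2) ≤ ∑' i, (g i)^2 := Summable.sum_le_tsum s (fun i _ => sq_nonneg _) hg
  have h0 : 0 ≤ ∑ i ∈ s, |f i * g i| := Finset.sum_nonneg (fun i _ => abs_nonneg _)
  calc ∑ i ∈ s, |f i * g i| = Real.sqrt ((∑ i ∈ s, |f i * g i|)^2) := (Real.sqrt_sq h0).symm
  _ ≤ Real.sqrt ((∑' i, (f i)^2) * (∑' i, (g i)^2)) := by
      apply Real.sqrt_le_sqrt
      refine h1.trans (mul_le_mul h2 h3 (Finset.sum_nonneg fun i _ => sq_nonneg _) (tsum_nonneg fun i => sq_nonneg _))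
  _ = _ := Real.sqrt_mul (tsum_nonneg fun i => sq_nonneg _) _

lemma tsum_sq_diff_bound {lam x y : ℕ → ℝ}
    (hx : Summable fun i => (lam i)^2 * (x i)^2) (hy : Summable fun i => (lam i)^2 * (y i)^2) :
    |(∑' i, (lam i)^2 * (x i)^2) - ∑' i, (lam i)^2 * (y i)^2| ≤
      Real.sqrt (∑' i, (lam i)^2 * (x i - y i)^2) *
      Real.sqrt (2 * (∑' i, (lam i)^2 * (x i - y i)^2) + 8 * ∑' i, (lam i)^2 * (y i)^2) := by
  set f : ℕ → ℝ := fun i => lam i * (x i - y i) with hfdef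
  set g : ℕ → ℝ := fun i => lam i * (x i + y i) with hgdef
  have hf2 : ∀ i, (f i)^2 = (lam i)^2 * (x i - y i)^2 := fun i => mul_pow _ _ _
  have hg2 : ∀ i, (g i)^2 = (lam i)^2 * (x i + y i)^2 := fun i => mul_pow _ _ _
  have hfs : Summable fun i => (f i)^2 := by
    simp only [hf2]; exact summable_wsq_sub hx hy
  have hys' : Summable fun i => (lam i)^2 * (-(y i))^2 := by simpa using hy
  have hgs : Summable fun i => (g i)^2 := by
    simp only [hg2]
    have := summable_wsq_sub (x := x) (y := fun i => -(y i)) hx hys'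
    simpa [sub_neg_eq_add] using this
  have habs : Summable fun i => |f i * g i| := by
    refine Summable.of_nonneg_of_le (fun i => abs_nonneg _) (fun i => ?_) (hfs.add hgs)
    calc |f i * g i| = |f i| * |g i| := abs_mul _ _
    _ ≤ (f i)^2 + (g i)^2 := by nlinarith [sq_nonneg (|f i| - |g i|), sq_abs (f i), sq_abs (g i), abs_nonneg (f i), abs_nonneg (g i)]
  have hterm : ∀ i, (lam i)^2 * (x i)^2 - (lam i)^2 * (y i)^2 = f i * g i := by
    intro i; simp only [hfdef, hgdef]; ring
  have hdiffsum : Summable fun i => (lam i)^2 * (x i)^2 - (lam i)^2 * (y i)^2 := hx.sub hy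
  calc |(∑' i, (lam i)^2 * (x i)^2) - ∑' i, (lam i)^2 * (y i)^2|
      = |∑' i, ((lam i)^2 * (x i)^2 - (lam i)^2 * (y i)^2)| := by rw [Summable.tsum_sub hx hy]
  _ = |∑' i, f i * g i| := by simp only [hterm]
  _ ≤ ∑' i, |f i * g i| := by
      have : Summable fun i => f i * g i := by
        simp only [← hterm]; exact hdiffsum
      have h := norm_tsum_le_tsum_norm (f := fun i => f i * g i)
        (by simpa only [Real.norm_eq_abs] using habs)
      simpa only [Real.norm_eq_abs] using h
  _ ≤ Real.sqrt (∑' i, (f i)^2) * Real.sqrt (∑' i, (g i)^2) := tsum_cs hfs hgs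
  _ ≤ _ := by
      simp only [hf2, hg2]
      refine mul_le_mul_of_nonneg_left ?_ (Real.sqrt_nonneg _)
      apply Real.sqrt_le_sqrt
      have h1 : ∀ i, (lam i)^2 * (x i + y i)^2 ≤ 2 * ((lam i)^2 * (x i - y i)^2) + 8 * ((lam i)^2 * (y i)^2) := by
        intro i; nlinarith [mul_nonneg (sq_nonneg (lam i)) (sq_nonneg (x i - 3 * y i))]
      calc (∑' i, (lam i)^2 * (x i + y i)^2)
          ≤ ∑' i, (2 * ((lam i)^2 * (x i - y i)^2) + 8 * ((lam i)^2 * (y i)^2)) := by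
            apply Summable.tsum_le_tsum h1
            · simpa only [hg2] using hgs
            · exact ((summable_wsq_sub hx hy).mul_left 2).add (hy.mul_left 8)
      _ = 2 * (∑' i, (lam i)^2 * (x i - y i)^2) + 8 * ∑' i, (lam i)^2 * (y i)^2 := by
            rw [Summable.tsum_add ((summable_wsq_sub hx hy).mul_left 2) (hy.mul_left 8),
              tsum_mul_left, tsum_mul_left]

lemma tendsto_tsum_sq_of_l2 {ι : Type*} {l : Filter ι} {lam : ℕ → ℝ} {x : ι → ℕ → ℝ} {y : ℕ → ℝ}
    (hx : ∀ᶠ n in l, Summable fun j => (lam j)^2 * (x n j)^2)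
    (hy : Summable fun j => (lam j)^2 * (y j)^2)
    (hE : Tendsto (fun n => ∑' j, (lam j)^2 * (x n j - y j)^2) l (𝓝 0)) :
    Tendsto (fun n => ∑' j, (lam j)^2 * (x n j)^2) l (𝓝 (∑' j, (lam j)^2 * (y j)^2)) := by
  set E : ι → ℝ := fun n => ∑' j, (lam j)^2 * (x n j - y j)^2 with hEdef
  have hbound : ∀ᶠ n in l, |(∑' j, (lam j)^2 * (x n j)^2) - ∑' j, (lam j)^2 * (y j)^2| ≤
      Real.sqrt (E n) * Real.sqrt (2 * E n + 8 * ∑' j, (lam j)^2 * (y j)^2) := by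
    filter_upwards [hx] with n hn
    exact tsum_sq_diff_bound hn hy
  have hg : Tendsto (fun n => Real.sqrt (E n) *
      Real.sqrt (2 * E n + 8 * ∑' j, (lam j)^2 * (y j)^2)) l (𝓝 0) := by
    have h1 : Tendsto (fun n => Real.sqrt (E n)) l (𝓝 0) := by
      have := (Real.continuous_sqrt.tendsto 0).comp hE
      simpa [Function.comp_def] using this
    have h2 : Tendsto (fun n => Real.sqrt (2 * E n + 8 * ∑' j, (lam j)^2 * (y j)^2)) l
        (𝓝 (Real.sqrt (2 * 0 + 8 * ∑' j, (lam j)^2 * (y j)^2))) := by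
      exact (Real.continuous_sqrt.tendsto _).comp (((hE.const_mul 2).add_const _))
    simpa using h1.mul h2
  have hdiff : Tendsto (fun n => (∑' j, (lam j)^2 * (x n j)^2) - ∑' j, (lam j)^2 * (y j)^2)
      l (𝓝 0) := squeeze_zero_norm' (by simpa [Real.norm_eq_abs] using hbound) hg
  have := hdiff.add_const (∑' j, (lam j)^2 * (y j)^2)
  simpa using this

lemma c2_facts {f : ℝ → ℝ} (hf : ContDiffOn ℝ 2 f (Set.Ici 0)) :
    DifferentiableOn ℝ f (Set.Ici 0) ∧ DifferentiableOn ℝ (derIci f) (Set.Ici 0) ∧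
      ContinuousOn (derIci (derIci f)) (Set.Ici 0) := by
  have h2 : ContDiffOn ℝ (1 + 1) f (Set.Ici 0) := by norm_num; exact hf
  rw [contDiffOn_succ_iff_derivWithin (uniqueDiffOn_Ici 0)] at h2
  obtain ⟨hd, -, h1⟩ := h2
  have h1' : ContDiffOn ℝ (0 + 1) (derivWithin f (Set.Ici 0)) (Set.Ici 0) := by norm_num; exact h1
  rw [contDiffOn_succ_iff_derivWithin (uniqueDiffOn_Ici 0)] at h1'
  obtain ⟨hd2, -, h0⟩ := h1'
  exact ⟨hd, hd2, h0.continuousOn⟩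

lemma c2_build {f : ℝ → ℝ} (hd : DifferentiableOn ℝ f (Set.Ici 0))
    (hd2 : DifferentiableOn ℝ (derIci f) (Set.Ici 0))
    (hc : ContinuousOn (derIci (derIci f)) (Set.Ici 0)) :
    ContDiffOn ℝ 2 f (Set.Ici 0) := by
  have h1 : ContDiffOn ℝ (0 + 1) (derivWithin f (Set.Ici 0)) (Set.Ici 0) := by
    rw [contDiffOn_succ_iff_derivWithin (uniqueDiffOn_Ici 0)]
    refine ⟨hd2, by simp, ?_⟩
    rw [contDiffOn_zero]
    exact hc
  have h2 : ContDiffOn ℝ (1 + 1) f (Set.Ici 0) := by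
    rw [contDiffOn_succ_iff_derivWithin (uniqueDiffOn_Ici 0)]
    exact ⟨hd, by simp, by norm_num at h1; exact h1⟩
  norm_num at h2; exact h2


lemma ftc_deriv {g : ℝ → ℝ} (hg : ContinuousOn g (Set.Ici 0)) {t₀ : ℝ} (ht₀ : 0 ≤ t₀) :
    HasDerivWithinAt (fun u => ∫ s in (0:ℝ)..u, g s) (g t₀) (Set.Ici 0) t₀ := by
  have hint : IntervalIntegrable g MeasureTheory.volume 0 t₀ := by
    apply ContinuousOn.intervalIntegrable
    rw [uIcc_of_le ht₀]
    exact hg.mono Icc_subset_Ici_self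
  rcases eq_or_lt_of_le ht₀ with h0 | hpos
  · subst h0
    refine intervalIntegral.integral_hasDerivWithinAt_right (s := Set.Ici 0) (t := Set.Ioi 0)
      hint ?_ ?_
    · exact ((hg.mono Ioi_subset_Ici_self).stronglyMeasurableAtFilter_nhdsWithin
        measurableSet_Ioi 0)
    · exact ((hg 0 self_mem_Ici).mono Ioi_subset_Ici_self)
  · have hnb : Set.Ici (0:ℝ) ∈ 𝓝 t₀ := Ici_mem_nhds hpos
    have hca : ContinuousAt g t₀ := (hg t₀ ht₀).continuousAt hnb
    have hmeas : StronglyMeasurableAtFilter g (𝓝 t₀) MeasureTheory.volume :=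
      ⟨Set.Ici 0, hnb, hg.aestronglyMeasurable measurableSet_Ici⟩
    exact (intervalIntegral.integral_hasDerivAt_right hint hmeas hca).hasDerivWithinAt

end Stmt16Helpers

open Topology MeasureTheory in
/-- a limit of global weak solutions (uniformly on bounded time intervals,
in the energy norm) is again a global weak solution. -/
theorem stmt16 (lam : ℕ → ℝ) (hpos : ∀ i, 0 < lam i) (hmono : Monotone lam)
    (htop : Tendsto lam atTop atTop)
    (μ₁ : ℝ) (hμ₁ : 0 < μ₁) (m : ℝ → ℝ)
    (hm_reg : ContDiffOn ℝ 1 m (Set.Ici 0))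
    (hm_lb : ∀ σ, 0 ≤ σ → μ₁ ≤ m σ)
    (V : ℕ → ℕ → ℝ → ℝ) (A B : ℕ → ℕ → ℝ)
    (hVen : ∀ n, InEnergy lam (A n) (B n))
    (hV : ∀ n, WeakSol lam m (A n) (B n) (V n))
    (v : ℕ → ℝ → ℝ) (a b : ℕ → ℝ) (hab : InEnergy lam a b)
    (hdiff : ∀ i, DifferentiableOn ℝ (v i) (Set.Ici 0))
    (hv0 : ∀ i, v i 0 = a i) (hv1 : ∀ i, derIci (v i) 0 = b i)
    (hs1 : ∀ t, 0 ≤ t → Summable fun i => (derIci (v i) t) ^ 2)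
    (hs2 : ∀ t, 0 ≤ t → Summable fun i => (lam i) ^ 2 * (v i t) ^ 2)
    (hc1 : ∀ t₀, 0 ≤ t₀ →
      Tendsto (fun t => ∑' i, (derIci (v i) t - derIci (v i) t₀) ^ 2)
        (nhdsWithin t₀ (Set.Ici 0)) (nhds 0))
    (hc2 : ∀ t₀, 0 ≤ t₀ →
      Tendsto (fun t => ∑' i, (lam i) ^ 2 * (v i t - v i t₀) ^ 2)
        (nhdsWithin t₀ (Set.Ici 0)) (nhds 0))
    (hconv : ∀ T : ℝ, 0 < T → ∀ ε : ℝ, 0 < ε → ∃ N : ℕ, ∀ n, N ≤ n →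
      ∀ t, 0 ≤ t → t ≤ T →
        (∑' i, (derIci (V n i) t - derIci (v i) t) ^ 2)
            + (∑' i, (lam i) ^ 2 * (V n i t - v i t) ^ 2) ≤ ε) :
    WeakSol lam m a b v := by
  have hmC : ContinuousOn m (Set.Ici 0) := hm_reg.continuousOn
  have hσnn : ∀ (u : ℕ → ℝ → ℝ) (t : ℝ), 0 ≤ ∑' j, (lam j)^2 * (u j t)^2 :=
    fun u t => tsum_nonneg fun j => by positivity
  -- continuity of σ
  have hσcont : ContinuousOn (fun t => ∑' j, (lam j)^2 * (v j t)^2) (Set.Ici 0) := by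
    intro t₀ ht₀
    exact tendsto_tsum_sq_of_l2 (x := fun t j => v j t) (y := fun j => v j t₀)
      (eventually_mem_nhdsWithin.mono (fun t ht => hs2 t ht)) (hs2 t₀ ht₀) (hc2 t₀ ht₀)
  have hσncont : ∀ n, ContinuousOn (fun t => ∑' j, (lam j)^2 * (V n j t)^2) (Set.Ici 0) := by
    intro n t₀ ht₀
    exact tendsto_tsum_sq_of_l2 (x := fun t j => V n j t) (y := fun j => V n j t₀)
      (eventually_mem_nhdsWithin.mono (fun t ht => (hV n).2.2.2.2.1 t ht))
      ((hV n).2.2.2.2.1 t₀ ht₀) ((hV n).2.2.2.2.2.2.1 t₀ ht₀)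
  -- continuity of g i
  have hσmaps : MapsTo (fun t => ∑' j, (lam j)^2 * (v j t)^2) (Set.Ici 0) (Set.Ici 0) :=
    fun t _ => hσnn v t
  have hgcont : ∀ i, ContinuousOn
      (fun s => -(m (∑' j, (lam j)^2 * (v j s)^2) * (lam i)^2 * v i s)) (Set.Ici 0) := by
    intro i
    exact (((hmC.comp hσcont hσmaps).mul continuousOn_const).mul (hdiff i).continuousOn).neg
  -- summability of error series
  have hsumE1 : ∀ n t, 0 ≤ t → Summable fun i => (derIci (V n i) t - derIci (v i) t)^2 :=
    fun n t ht => summable_sq_sub ((hV n).2.2.2.1 t ht) (hs1 t ht)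
  have hsumE2 : ∀ n t, 0 ≤ t → Summable fun i => (lam i)^2 * (V n i t - v i t)^2 :=
    fun n t ht => summable_wsq_sub ((hV n).2.2.2.2.1 t ht) (hs2 t ht)
  -- convergence of errors
  have hE : ∀ t : ℝ, 0 ≤ t → Tendsto (fun n => (∑' i, (derIci (V n i) t - derIci (v i) t)^2)
      + ∑' i, (lam i)^2 * (V n i t - v i t)^2) atTop (𝓝 0) := by
    intro t ht
    rw [Metric.tendsto_atTop]
    intro ε hε
    obtain ⟨N, hN⟩ := hconv (t+1) (by linarith) (ε/2) (by linarith)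
    refine ⟨N, fun n hn => ?_⟩
    have h := hN n hn t ht (by linarith)
    have h1 : (0:ℝ) ≤ ∑' i, (derIci (V n i) t - derIci (v i) t)^2 :=
      tsum_nonneg fun i => sq_nonneg _
    have h2 : (0:ℝ) ≤ ∑' i, (lam i)^2 * (V n i t - v i t)^2 :=
      tsum_nonneg fun i => by positivity
    rw [Real.dist_eq, sub_zero, abs_of_nonneg (by linarith)]
    linarith
  have hE1 : ∀ t : ℝ, 0 ≤ t →
      Tendsto (fun n => ∑' i, (derIci (V n i) t - derIci (v i) t)^2) atTop (𝓝 0) := by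
    intro t ht
    refine squeeze_zero (fun n => tsum_nonneg fun i => sq_nonneg _) (fun n => ?_) (hE t ht)
    exact le_add_of_nonneg_right (tsum_nonneg fun i => by positivity)
  have hE2 : ∀ t : ℝ, 0 ≤ t →
      Tendsto (fun n => ∑' i, (lam i)^2 * (V n i t - v i t)^2) atTop (𝓝 0) := by
    intro t ht
    refine squeeze_zero (fun n => tsum_nonneg fun i => by positivity) (fun n => ?_) (hE t ht)
    exact le_add_of_nonneg_left (tsum_nonneg fun i => sq_nonneg _)
  -- pointwise convergence of derivatives
  have hwn : ∀ i (t : ℝ), 0 ≤ t →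
      Tendsto (fun n => derIci (V n i) t) atTop (𝓝 (derIci (v i) t)) := by
    intro i t ht
    have hb : ∀ n, ‖derIci (V n i) t - derIci (v i) t‖ ≤
        Real.sqrt (∑' i', (derIci (V n i') t - derIci (v i') t)^2) := by
      intro n
      rw [Real.norm_eq_abs, ← Real.sqrt_sq_eq_abs]
      exact Real.sqrt_le_sqrt (Summable.le_tsum (hsumE1 n t ht) i (fun j _ => sq_nonneg _))
    have hsq : Tendsto (fun n => Real.sqrt (∑' i', (derIci (V n i') t - derIci (v i') t)^2))
        atTop (𝓝 0) := by
      simpa [Function.comp_def] using (Real.continuous_sqrt.tendsto 0).comp (hE1 t ht)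
    have := squeeze_zero_norm hb hsq
    simpa using this.add_const (derIci (v i) t)
  -- pointwise convergence of values
  have hvn : ∀ i (t : ℝ), 0 ≤ t →
      Tendsto (fun n => V n i t) atTop (𝓝 (v i t)) := by
    intro i t ht
    have hb : ∀ n, ‖lam i * (V n i t - v i t)‖ ≤
        Real.sqrt (∑' i', (lam i')^2 * (V n i' t - v i' t)^2) := by
      intro n
      rw [Real.norm_eq_abs, ← Real.sqrt_sq_eq_abs]
      apply Real.sqrt_le_sqrt
      rw [mul_pow]
      exact Summable.le_tsum (hsumE2 n t ht) i (fun j _ => by positivity)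
    have hsq : Tendsto (fun n => Real.sqrt (∑' i', (lam i')^2 * (V n i' t - v i' t)^2))
        atTop (𝓝 0) := by
      simpa [Function.comp_def] using (Real.continuous_sqrt.tendsto 0).comp (hE2 t ht)
    have h0 := squeeze_zero_norm hb hsq
    have h1 := h0.const_mul (lam i)⁻¹
    have h2 : Tendsto (fun n => V n i t - v i t) atTop (𝓝 0) := by
      have hne : lam i ≠ 0 := ne_of_gt (hpos i)
      simpa [inv_mul_cancel_left₀ hne] using h1
    simpa using h2.add_const (v i t)
  -- convergence of sigma_n
  have hσn : ∀ t : ℝ, 0 ≤ t → Tendsto (fun n => ∑' j, (lam j)^2 * (V n j t)^2) atTop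
      (𝓝 (∑' j, (lam j)^2 * (v j t)^2)) := by
    intro t ht
    exact tendsto_tsum_sq_of_l2 (x := fun n j => V n j t) (y := fun j => v j t)
      (Eventually.of_forall fun n => (hV n).2.2.2.2.1 t ht) (hs2 t ht) (hE2 t ht)
  -- FTC for approximations
  have hFTCn : ∀ n i (t : ℝ), 0 ≤ t → derIci (V n i) t = derIci (V n i) 0 +
      ∫ s in (0:ℝ)..t, -(m (∑' j, (lam j)^2 * (V n j s)^2) * (lam i)^2 * V n i s) := by
    intro n i t ht
    obtain ⟨hd, hd2, hc⟩ := c2_facts ((hV n).1 i)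
    have heq : ∫ s in (0:ℝ)..t, derIci (derIci (V n i)) s
        = derIci (V n i) t - derIci (V n i) 0 := by
      apply intervalIntegral.integral_eq_sub_of_hasDeriv_right_of_le ht
      · exact (hd2.continuousOn).mono Icc_subset_Ici_self
      · intro x hx
        exact ((hd2 x (le_of_lt hx.1)).hasDerivWithinAt).mono
          (fun y hy => le_of_lt (lt_trans hx.1 hy))
      · apply ContinuousOn.intervalIntegrable
        rw [uIcc_of_le ht]
        exact hc.mono Icc_subset_Ici_self
    have hcongr : ∀ s ∈ uIcc (0:ℝ) t, derIci (derIci (V n i)) s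
        = -(m (∑' j, (lam j)^2 * (V n j s)^2) * (lam i)^2 * V n i s) := by
      intro s hs
      rw [uIcc_of_le ht] at hs
      have hode := (hV n).2.2.2.2.2.2.2 i s hs.1
      linarith
    rw [← intervalIntegral.integral_congr hcongr, heq]
    ring
  -- key integral representation for the limit
  have hkey : ∀ i (t : ℝ), 0 ≤ t → derIci (v i) t = derIci (v i) 0 +
      ∫ s in (0:ℝ)..t, -(m (∑' j, (lam j)^2 * (v j s)^2) * (lam i)^2 * v i s) := by
    intro i t ht
    obtain ⟨K, hK⟩ := isCompact_Icc.exists_bound_of_continuousOn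
      (hσcont.mono (Icc_subset_Ici_self : Icc (0:ℝ) t ⊆ Ici 0))
    obtain ⟨Cv, hCv⟩ := isCompact_Icc.exists_bound_of_continuousOn
      ((hdiff i).continuousOn.mono (Icc_subset_Ici_self : Icc (0:ℝ) t ⊆ Ici 0))
    obtain ⟨Cm, hCm⟩ := isCompact_Icc.exists_bound_of_continuousOn
      (hmC.mono (Icc_subset_Ici_self : Icc (0:ℝ) (2*K+2) ⊆ Ici 0))
    obtain ⟨N, hN⟩ := hconv (t+1) (by linarith) 1 one_pos
    have hDCT : Tendsto (fun n => ∫ s in (0:ℝ)..t,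
        -(m (∑' j, (lam j)^2 * (V n j s)^2) * (lam i)^2 * V n i s)) atTop
        (𝓝 (∫ s in (0:ℝ)..t, -(m (∑' j, (lam j)^2 * (v j s)^2) * (lam i)^2 * v i s))) := by
      apply intervalIntegral.tendsto_integral_filter_of_dominated_convergence
        (bound := fun _ => |Cm| * ((lam i)^2 * (|Cv| + (lam i)⁻¹)))
      · refine Eventually.of_forall (fun n => ?_)
        have hcont : ContinuousOn
            (fun s => -(m (∑' j, (lam j)^2 * (V n j s)^2) * (lam i)^2 * V n i s))
            (Set.Ici 0) := by
          exact (((hmC.comp (hσncont n) (fun s _ => hσnn (V n) s)).mul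
            continuousOn_const).mul ((c2_facts ((hV n).1 i)).1.continuousOn)).neg
        rw [uIoc_of_le ht]
        exact (hcont.mono (fun s hs => le_of_lt hs.1)).aestronglyMeasurable measurableSet_Ioc
      · filter_upwards [eventually_ge_atTop N] with n hn
        apply ae_of_all
        intro s hs
        rw [uIoc_of_le ht] at hs
        have hs0 : (0:ℝ) ≤ s := le_of_lt hs.1
        have hsc : s ∈ Icc (0:ℝ) t := ⟨hs0, hs.2⟩
        have hb := hN n hn s hs0 (by linarith [hs.2])
        have hE1nn : (0:ℝ) ≤ ∑' i', (derIci (V n i') s - derIci (v i') s)^2 :=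
          tsum_nonneg fun i' => sq_nonneg _
        have hE2le : (∑' i', (lam i')^2 * (V n i' s - v i' s)^2) ≤ 1 := by linarith
        -- bound on V n i s
        have hterm : (lam i)^2 * (V n i s - v i s)^2 ≤ 1 :=
          le_trans (Summable.le_tsum (hsumE2 n s hs0) i (fun j _ => by positivity)) hE2le
        have hVb : |V n i s| ≤ |Cv| + (lam i)⁻¹ := by
          have h1 : |lam i * (V n i s - v i s)| ≤ 1 := by
            rw [← Real.sqrt_sq_eq_abs]
            rw [show ((1:ℝ)) = Real.sqrt 1 by simp]
            apply Real.sqrt_le_sqrt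
            rw [mul_pow]; exact hterm
          have h2 : |V n i s - v i s| ≤ (lam i)⁻¹ := by
            rw [abs_mul, abs_of_pos (hpos i)] at h1
            rw [inv_eq_one_div, le_div_iff₀ (hpos i)]
            nlinarith [h1]
          calc |V n i s| = |v i s + (V n i s - v i s)| := by ring_nf
          _ ≤ |v i s| + |V n i s - v i s| := abs_add_le _ _
          _ ≤ |Cv| + (lam i)⁻¹ := by
              have := hCv s hsc
              rw [Real.norm_eq_abs] at this
              exact add_le_add (this.trans (le_abs_self Cv)) h2
        -- bound on sigma_n
        have hσnb : (∑' j, (lam j)^2 * (V n j s)^2) ∈ Icc (0:ℝ) (2*K+2) := by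
          constructor
          · exact hσnn (V n) s
          · have hptw : ∀ j, (lam j)^2 * (V n j s)^2 ≤
                2 * ((lam j)^2 * (V n j s - v j s)^2) + 2 * ((lam j)^2 * (v j s)^2) := by
              intro j
              nlinarith [mul_nonneg (sq_nonneg (lam j)) (sq_nonneg (V n j s - 2 * v j s))]
            have hsum : (∑' j, (lam j)^2 * (V n j s)^2) ≤
                ∑' j, (2 * ((lam j)^2 * (V n j s - v j s)^2) + 2 * ((lam j)^2 * (v j s)^2)) := by
              apply Summable.tsum_le_tsum hptw ((hV n).2.2.2.2.1 s hs0)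
              exact ((hsumE2 n s hs0).mul_left 2).add ((hs2 s hs0).mul_left 2)
            have heq2 : (∑' j, (2 * ((lam j)^2 * (V n j s - v j s)^2)
                + 2 * ((lam j)^2 * (v j s)^2)))
                = 2 * (∑' j, (lam j)^2 * (V n j s - v j s)^2)
                  + 2 * ∑' j, (lam j)^2 * (v j s)^2 := by
              rw [Summable.tsum_add ((hsumE2 n s hs0).mul_left 2) ((hs2 s hs0).mul_left 2),
                tsum_mul_left, tsum_mul_left]
            have hKs : (∑' j, (lam j)^2 * (v j s)^2) ≤ K := by
              have := hK s hsc
              rw [Real.norm_eq_abs] at this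
              exact (le_abs_self _).trans this
            rw [heq2] at hsum
            linarith
        have hmb : |m (∑' j, (lam j)^2 * (V n j s)^2)| ≤ |Cm| := by
          have := hCm _ hσnb
          rw [Real.norm_eq_abs] at this
          exact this.trans (le_abs_self Cm)
        rw [Real.norm_eq_abs, abs_neg, abs_mul, abs_mul]
        have h3 : |(lam i)^2| = (lam i)^2 := abs_of_nonneg (sq_nonneg _)
        rw [h3]
        have h4 : (0:ℝ) ≤ (lam i)^2 := sq_nonneg _
        calc |m (∑' j, (lam j)^2 * (V n j s)^2)| * (lam i)^2 * |V n i s|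
            ≤ |Cm| * (lam i)^2 * (|Cv| + (lam i)⁻¹) := by
              apply mul_le_mul
              · exact mul_le_mul_of_nonneg_right hmb h4
              · exact hVb
              · exact abs_nonneg _
              · positivity
        _ = |Cm| * ((lam i)^2 * (|Cv| + (lam i)⁻¹)) := by ring
      · exact intervalIntegrable_const
      · apply ae_of_all
        intro s hs
        rw [uIoc_of_le ht] at hs
        have hs0 : (0:ℝ) ≤ s := le_of_lt hs.1
        have h1 := hσn s hs0
        have h2 : Tendsto (fun n => m (∑' j, (lam j)^2 * (V n j s)^2)) atTop
            (𝓝 (m (∑' j, (lam j)^2 * (v j s)^2))) := by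
          have hcw : Tendsto m (𝓝[Set.Ici 0] (∑' j, (lam j)^2 * (v j s)^2))
              (𝓝 (m (∑' j, (lam j)^2 * (v j s)^2))) := hmC _ (hσnn v s)
          apply hcw.comp
          rw [tendsto_nhdsWithin_iff]
          exact ⟨h1, Eventually.of_forall fun n => hσnn (V n) s⟩
        exact (((h2.mul tendsto_const_nhds).mul (hvn i s hs0))).neg
    have hlim2 : Tendsto (fun n => derIci (V n i) 0 +
        ∫ s in (0:ℝ)..t, -(m (∑' j, (lam j)^2 * (V n j s)^2) * (lam i)^2 * V n i s)) atTop
        (𝓝 (derIci (v i) 0 +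
          ∫ s in (0:ℝ)..t, -(m (∑' j, (lam j)^2 * (v j s)^2) * (lam i)^2 * v i s))) :=
      (hwn i 0 le_rfl).add hDCT
    have hlim1 := hwn i t ht
    have heqfun : (fun n => derIci (V n i) t) = fun n => derIci (V n i) 0 +
        ∫ s in (0:ℝ)..t, -(m (∑' j, (lam j)^2 * (V n j s)^2) * (lam i)^2 * V n i s) :=
      funext fun n => hFTCn n i t ht
    rw [heqfun] at hlim1
    exact tendsto_nhds_unique hlim1 hlim2
  -- derivative of derIci (v i)
  have hder : ∀ i (t₀ : ℝ), 0 ≤ t₀ → HasDerivWithinAt (derIci (v i))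
      (-(m (∑' j, (lam j)^2 * (v j t₀)^2) * (lam i)^2 * v i t₀)) (Set.Ici 0) t₀ := by
    intro i t₀ ht₀
    have hbase := (ftc_deriv (hgcont i) ht₀).const_add (derIci (v i) 0)
    exact hbase.congr (fun y hy => hkey i y hy) (hkey i t₀ ht₀)
  have hder2 : ∀ i (t : ℝ), 0 ≤ t → derIci (derIci (v i)) t
      = -(m (∑' j, (lam j)^2 * (v j t)^2) * (lam i)^2 * v i t) :=
    fun i t ht => (hder i t ht).derivWithin (uniqueDiffOn_Ici 0 t ht)
  refine ⟨?_, hv0, hv1, hs1, hs2, hc1, hc2, ?_⟩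
  · intro i
    apply c2_build (hdiff i) (fun t ht => (hder i t ht).differentiableWithinAt)
    exact (hgcont i).congr (fun t ht => hder2 i t ht)
  · intro i t ht
    rw [hder2 i t ht]
    ring
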